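/- The ideal 𝔰𝔩_{f,1} := (16s − 4t + u², 1728s³ − 5) of the polynomial ring ℚ[s,t,u] is a prime ideal. -/

import Mathlib

open MvPolynomial

noncomputable section SLaux

/-- The cubic `X^3 - 5/1728` over `ℚ`. -/
def slq : Polynomial ℚ := Polynomial.X ^ 3 - Polynomial.C (5/1728)

lemma sl_no_cube (b : ℚ) : b ^ 3 ≠ 5 / 1728 := by
  intro hb
  have h12 : ((12 : ℚ) * b) ^ 3 = 5 := by rw [mul_pow, hb]; norm_num
  set c : ℚ := 12 * b with hc
  have hnum : c.num ^ 3 = 5 := by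
    have := congrArg Rat.num h12
    rwa [Rat.num_pow, show ((5:ℚ)).num = 5 by norm_num] at this
  rcases le_or_gt c.num 1 with h | h
  · nlinarith [sq_nonneg c.num, sq_nonneg (c.num - 1), sq_nonneg (c.num + 1)]
  · nlinarith [sq_nonneg c.num, sq_nonneg (c.num - 2)]

lemma slq_irred : Irreducible slq :=
  X_pow_sub_C_irreducible_of_prime Nat.prime_three sl_no_cube

instance : Fact (Irreducible slq) := ⟨slq_irred⟩

/-- The field `ℚ(α)` with `α³ = 5/1728`. -/
abbrev slK : Type := AdjoinRoot slq

lemma sl_root_cube : (AdjoinRoot.root slq) ^ 3 = algebraMap ℚ slK (5/1728) := by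
  have h := AdjoinRoot.eval₂_root slq
  rw [show slq = Polynomial.X ^ 3 - Polynomial.C (5/1728) from rfl] at h
  simp only [Polynomial.eval₂_sub, Polynomial.eval₂_pow, Polynomial.eval₂_X,
    Polynomial.eval₂_C, sub_eq_zero] at h
  rw [show algebraMap ℚ slK (5/1728) = AdjoinRoot.of slq (5/1728) from rfl]
  exact h

/-- The evaluation map `ℚ[s,t,u] → ℚ(α)[X]`, `s ↦ α`, `t ↦ 4α + X²/4`, `u ↦ X`. -/
def slφ : MvPolynomial (Fin 3) ℚ →ₐ[ℚ] Polynomial slK :=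
  MvPolynomial.aeval
    ![Polynomial.C (AdjoinRoot.root slq),
      4 * Polynomial.C (AdjoinRoot.root slq)
        + Polynomial.C (algebraMap ℚ slK (1/4)) * Polynomial.X ^ 2,
      Polynomial.X]

lemma slφ_X0 : slφ (X 0) = Polynomial.C (AdjoinRoot.root slq) := by
  simp [slφ]

lemma slφ_X1 : slφ (X 1) = 4 * Polynomial.C (AdjoinRoot.root slq)
    + Polynomial.C (algebraMap ℚ slK (1/4)) * Polynomial.X ^ 2 := by
  simp [slφ]

lemma slφ_X2 : slφ (X 2) = Polynomial.X := by
  simp [slφ, Matrix.cons_val_two, Matrix.tail_cons, Matrix.head_cons]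

lemma sl_h4 : (4 : Polynomial slK) * Polynomial.C (algebraMap ℚ slK (1/4)) = 1 := by
  rw [show (4:Polynomial slK) = Polynomial.C (4:slK) from
      (map_ofNat (Polynomial.C : slK →+* _) 4).symm,
    ← Polynomial.C_mul, show (4:slK) = algebraMap ℚ slK 4 from
      (map_ofNat (algebraMap ℚ slK) 4).symm, ← map_mul]
  norm_num

def slI : Ideal (MvPolynomial (Fin 3) ℚ) :=
  Ideal.span {(16 * X 0 - 4 * X 1 + X 2 ^ 2 : MvPolynomial (Fin 3) ℚ),
      (1728 * X 0 ^ 3 - 5 : MvPolynomial (Fin 3) ℚ)}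

lemma slφ_g1 : slφ (16 * X 0 - 4 * X 1 + X 2 ^ 2) = 0 := by
  rw [map_add, map_sub, map_mul, map_mul, map_pow, slφ_X0, slφ_X1, slφ_X2,
    map_ofNat, map_ofNat]
  linear_combination (-(Polynomial.X ^ 2 : Polynomial slK)) * sl_h4

lemma slφ_g2 : slφ (1728 * X 0 ^ 3 - 5) = 0 := by
  rw [map_sub, map_mul, map_pow, slφ_X0, map_ofNat, map_ofNat,
    ← Polynomial.C_pow, sl_root_cube,
    show (1728:Polynomial slK) = Polynomial.C (algebraMap ℚ slK 1728) by
      rw [map_ofNat, map_ofNat],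
    show (5:Polynomial slK) = Polynomial.C (algebraMap ℚ slK 5) by
      rw [map_ofNat, map_ofNat],
    ← Polynomial.C_mul, ← map_mul, ← Polynomial.C_sub, ← map_sub]
  norm_num

lemma sl_mem_X0 : (X 0 : MvPolynomial (Fin 3) ℚ) ^ 3 - C (5/1728) ∈ slI := by
  have h2 : (1728 * X 0 ^ 3 - 5 : MvPolynomial (Fin 3) ℚ) ∈ slI :=
    Ideal.subset_span (Set.mem_insert_of_mem _ rfl)
  have key := Ideal.mul_mem_left slI (C (1/1728)) h2
  convert key using 1
  rw [show (1728 : MvPolynomial (Fin 3) ℚ) = C 1728 from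
      (map_ofNat (C : ℚ →+* _) 1728).symm,
    show (5 : MvPolynomial (Fin 3) ℚ) = C (5:ℚ) from
      (map_ofNat (C : ℚ →+* _) 5).symm]
  rw [mul_sub, ← mul_assoc, ← C_mul, ← C_mul]
  norm_num

/-- The inverse map on the base field. -/
def slψ₀ : slK →+* MvPolynomial (Fin 3) ℚ ⧸ slI :=
  AdjoinRoot.lift (algebraMap ℚ _) (Ideal.Quotient.mk slI (X 0)) (by
    rw [show slq = Polynomial.X ^ 3 - Polynomial.C (5/1728) from rfl]
    simp only [Polynomial.eval₂_sub, Polynomial.eval₂_pow, Polynomial.eval₂_X,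
      Polynomial.eval₂_C, sub_eq_zero]
    rw [show (algebraMap ℚ (MvPolynomial (Fin 3) ℚ ⧸ slI) (5/1728)) =
      Ideal.Quotient.mk slI (C (5/1728)) from rfl, ← map_pow]
    rw [Ideal.Quotient.mk_eq_mk_iff_sub_mem]
    exact sl_mem_X0)

def slψ : Polynomial slK →+* MvPolynomial (Fin 3) ℚ ⧸ slI :=
  Polynomial.eval₂RingHom slψ₀ (Ideal.Quotient.mk slI (X 2))

lemma slψ₀_algebraMap (c : ℚ) :
    slψ₀ (algebraMap ℚ slK c) = algebraMap ℚ (MvPolynomial (Fin 3) ℚ ⧸ slI) c := by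
  rw [show algebraMap ℚ slK c = AdjoinRoot.of slq c from rfl, slψ₀, AdjoinRoot.lift_of]

lemma slψ_C (a : slK) : slψ (Polynomial.C a) = slψ₀ a := by simp [slψ]

set_option synthInstance.maxHeartbeats 1000000 in
set_option maxHeartbeats 1000000 in
lemma slψ_comp (p : MvPolynomial (Fin 3) ℚ) : slψ (slφ p) = Ideal.Quotient.mk slI p := by
  have key : (slψ.comp slφ.toRingHom) = (Ideal.Quotient.mk slI : _ →+* _) := by
    apply MvPolynomial.ringHom_ext
    · intro a
      simp only [RingHom.comp_apply, AlgHom.toRingHom_eq_coe, RingHom.coe_coe]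
      rw [show (slφ (C a)) = Polynomial.C (algebraMap ℚ slK a) by
        rw [show (C a : MvPolynomial (Fin 3) ℚ) = algebraMap ℚ _ a from rfl,
          AlgHom.commutes]; rfl]
      rw [slψ_C, slψ₀_algebraMap]
      rfl
    · intro i
      fin_cases i
      · show slψ (slφ (X 0)) = Ideal.Quotient.mk slI (X 0)
        rw [slφ_X0, slψ_C, slψ₀, AdjoinRoot.lift_root]
      · show slψ (slφ (X 1)) = Ideal.Quotient.mk slI (X 1)
        rw [slφ_X1, map_add, map_mul, map_mul, map_pow, slψ_C, slψ_C]
        rw [show slψ Polynomial.X = Ideal.Quotient.mk slI (X 2) by simp [slψ]]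
        rw [show (slψ (4 : Polynomial slK)) = Ideal.Quotient.mk slI 4 by
          rw [map_ofNat]; rfl]
        rw [slψ₀_algebraMap, show slψ₀ (AdjoinRoot.root slq) = Ideal.Quotient.mk slI (X 0) by
          rw [slψ₀, AdjoinRoot.lift_root]]
        rw [show (algebraMap ℚ (MvPolynomial (Fin 3) ℚ ⧸ slI) (1/4))
            = Ideal.Quotient.mk slI (C (1/4)) from rfl]
        rw [← map_mul, ← map_pow, ← map_mul, ← map_add, Ideal.Quotient.mk_eq_mk_iff_sub_mem]
        have h1 : (16 * X 0 - 4 * X 1 + X 2 ^ 2 : MvPolynomial (Fin 3) ℚ) ∈ slI :=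
          Ideal.subset_span (Set.mem_insert _ _)
        have key := Ideal.mul_mem_left slI (C (1/4)) h1
        convert key using 1
        rw [show (4 : MvPolynomial (Fin 3) ℚ) = C 4 from
            (map_ofNat (C : ℚ →+* _) 4).symm,
          show (16 : MvPolynomial (Fin 3) ℚ) = C 16 from
            (map_ofNat (C : ℚ →+* _) 16).symm]
        rw [mul_add, mul_sub, ← mul_assoc, ← mul_assoc, ← C_mul, ← C_mul]
        norm_num
        ring
      · show slψ (slφ (X 2)) = Ideal.Quotient.mk slI (X 2)
        rw [slφ_X2]
        simp [slψ]
  exact DFunLike.congr_fun key p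

lemma slI_eq : slI = RingHom.ker slφ.toRingHom := by
  apply le_antisymm
  · rw [slI, Ideal.span_le]
    intro p hp
    rcases hp with h | h
    · rw [h]; exact slφ_g1
    · rw [Set.mem_singleton_iff] at h; rw [h]; exact slφ_g2
  · intro p hp
    rw [RingHom.mem_ker] at hp
    have h := slψ_comp p
    rw [show slφ p = 0 from hp, map_zero] at h
    exact (Ideal.Quotient.eq_zero_iff_mem).mp h.symm

end SLaux

/-- The ideal `𝔰𝔩_{f,1} = (16s − 4t + u², 1728s³ − 5)` of `ℚ[s,t,u]`
is prime (variables `X 0 = s`, `X 1 = t`, `X 2 = u`). -/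
theorem sl_f1_isPrime :
    (Ideal.span {(16 * X 0 - 4 * X 1 + X 2 ^ 2 : MvPolynomial (Fin 3) ℚ),
        (1728 * X 0 ^ 3 - 5 : MvPolynomial (Fin 3) ℚ)}).IsPrime := by
  rw [show (Ideal.span {(16 * X 0 - 4 * X 1 + X 2 ^ 2 : MvPolynomial (Fin 3) ℚ),
        (1728 * X 0 ^ 3 - 5 : MvPolynomial (Fin 3) ℚ)}) = slI from rfl, slI_eq]
  exact RingHom.ker_isPrime _
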